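/- Let p be an odd prime and k a field of characteristic p. Let g ∈ k[[ζ]] be a power series with g(ζ) ≡ ζ(1 + a_2ζ^2 + a_3ζ^3 + a_4ζ^4) modulo ζ^6. Then g^p(ζ) − ζ ≡ a_2^{p−2}·((3/2)·a_2^3 + a_3^2 − a_2·a_4)·ζ^{2p+3} modulo ζ^{2p+4}, where g^p denotes the p-fold composition of g with itself and 3/2 denotes 3·2⁻¹ in k. -/

import Mathlib

/-- Composition of formal power series: `f.comp g = f ∘ g`, the power series obtained by
substituting `g` into `f`.  (This gives the usual composition whenever the constant
coefficient of `g` is zero.) -/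
noncomputable def PowerSeries.comp {R : Type*} [CommSemiring R] (f g : PowerSeries R) :
    PowerSeries R :=
  PowerSeries.mk fun n =>
    ∑ i ∈ Finset.range (n + 1), PowerSeries.coeff i f * PowerSeries.coeff n (g ^ i)

/-- The `m`-fold composition `g ∘ g ∘ ⋯ ∘ g` of a power series with itself
(`m = 0` gives the identity series `X`). -/
noncomputable def PowerSeries.compIterate {R : Type*} [CommSemiring R]
    (g : PowerSeries R) (m : ℕ) : PowerSeries R :=
  (fun h => PowerSeries.comp h g)^[m] PowerSeries.X

open Finset

namespace PthAux

/-- `(2r+1)!! = ∏ (2m+3) for m < r` shifted: this is `3·5···(2r+1)`. -/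
def dfOdd (r : ℕ) : ℤ := ∏ m ∈ range r, (2*m+3 : ℤ)
/-- `1·3···(2r-1)` -/
def alphaP (r : ℕ) : ℤ := ∏ m ∈ range r, (2*m+1 : ℤ)
/-- `(2r)!! = 2·4···(2r)` -/
def dfEven (r : ℕ) : ℤ := ∏ m ∈ range r, (2*m+2 : ℤ)
def Pseq (r : ℕ) : ℤ := ∑ j ∈ range r, ∏ m ∈ range r \ {j}, (2*m+3 : ℤ)
def Rseq (r : ℕ) : ℤ := ∑ j ∈ range r, (j:ℤ) * ∏ m ∈ range r \ {j}, (2*m+3 : ℤ)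
def Gseq (r : ℕ) : ℤ := ∑ j ∈ range r, dfEven (j+1) * ∏ m ∈ Finset.Ico (j+1) r, (2*m+3 : ℤ)
def Qseq (r : ℕ) : ℤ := 2*(Pseq r + Rseq r) - Gseq r
def betaSeq (r : ℕ) : ℤ := dfOdd r - dfEven r

lemma alphaP_succ (r : ℕ) : alphaP (r+1) = alphaP r * (2*r+1) := by
  simp [alphaP, prod_range_succ]

lemma dfOdd_eq (r : ℕ) : dfOdd r = (2*r+1) * alphaP r := by
  have h : alphaP (r+1) = dfOdd r := by
    rw [alphaP, prod_range_succ']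
    simp [dfOdd]
    exact prod_congr rfl (by intros; ring)
  rw [← h, alphaP_succ]; ring

lemma dfOdd_succ (r : ℕ) : dfOdd (r+1) = dfOdd r * (2*r+3) := by
  simp [dfOdd, prod_range_succ]

lemma dfEven_succ (r : ℕ) : dfEven (r+1) = dfEven r * (2*r+2) := by
  simp [dfEven, prod_range_succ]

lemma sdiff_top (r : ℕ) : range (r+1) \ {r} = range r := by
  ext x; simp [Finset.mem_range, Finset.mem_sdiff]; omega

lemma sdiff_insert (r j : ℕ) (hj : j < r) :
    range (r+1) \ {j} = insert r (range r \ {j}) := by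
  ext x; simp [Finset.mem_range, Finset.mem_sdiff]; omega

lemma prod_sdiff_succ (r j : ℕ) (hj : j < r) :
    ∏ m ∈ range (r+1) \ {j}, (2*m+3 : ℤ) = (2*r+3) * ∏ m ∈ range r \ {j}, (2*m+3 : ℤ) := by
  rw [sdiff_insert r j hj, prod_insert (by simp)]

lemma Pseq_succ (r : ℕ) : Pseq (r+1) = (2*r+3) * Pseq r + dfOdd r := by
  rw [Pseq, sum_range_succ, sdiff_top]
  rw [Finset.sum_congr rfl (fun j hj => prod_sdiff_succ r j (mem_range.mp hj))]
  rw [← Finset.mul_sum]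
  rfl

lemma Rseq_succ (r : ℕ) : Rseq (r+1) = (2*r+3) * Rseq r + r * dfOdd r := by
  rw [Rseq, sum_range_succ, sdiff_top]
  rw [show ∑ j ∈ range r, (j:ℤ) * ∏ m ∈ range (r+1) \ {j}, (2*m+3 : ℤ)
      = ∑ j ∈ range r, (2*(r:ℤ)+3) * ((j:ℤ) * ∏ m ∈ range r \ {j}, (2*m+3 : ℤ)) from
    Finset.sum_congr rfl (fun j hj => by rw [prod_sdiff_succ r j (mem_range.mp hj)]; ring)]
  rw [← Finset.mul_sum]
  rfl

lemma Gseq_succ (r : ℕ) : Gseq (r+1) = (2*r+3) * Gseq r + dfEven (r+1) := by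
  rw [Gseq, sum_range_succ]
  simp only [Finset.Ico_self, prod_empty, mul_one]
  rw [show ∑ j ∈ range r, dfEven (j+1) * ∏ m ∈ Finset.Ico (j+1) (r+1), (2*m+3 : ℤ)
      = ∑ j ∈ range r, (2*(r:ℤ)+3) * (dfEven (j+1) * ∏ m ∈ Finset.Ico (j+1) r, (2*m+3 : ℤ)) from
    Finset.sum_congr rfl (fun j hj => by
      rw [Finset.prod_Ico_succ_top (mem_range.mp hj)]; push_cast; ring)]
  rw [← Finset.mul_sum, Gseq]

lemma betaSeq_succ (r : ℕ) : betaSeq (r+1) = (2*r+2) * betaSeq r + (2*r+1) * alphaP r := by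
  simp only [betaSeq, dfOdd_succ, dfEven_succ, dfOdd_eq]
  ring

lemma Qseq_succ (r : ℕ) : Qseq (r+1) = (2*r+3) * Qseq r + (2*r+2) * betaSeq r := by
  simp only [Qseq, Pseq_succ, Rseq_succ, Gseq_succ, betaSeq, dfEven_succ, dfOdd_eq]
  ring

lemma dfEven_eq (r : ℕ) : dfEven r = 2^r * (r.factorial : ℤ) := by
  induction r with
  | zero => simp [dfEven]
  | succ n ih => rw [dfEven_succ, ih, Nat.factorial_succ]; push_cast; ring



variable {p t : ℕ}

section

variable (hp : p.Prime) (hpt : p = 2*t+3)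
include hp hpt

lemma two_ne_zero' : (2 : ZMod p) ≠ 0 := by
  haveI := Fact.mk hp
  have : ((2:ℕ) : ZMod p) ≠ 0 := by
    rw [Ne, ZMod.natCast_eq_zero_iff]
    intro h
    have := Nat.le_of_dvd (by norm_num) h
    omega
  simpa using this

lemma cast_p_zero : ((2*t+3 : ℕ) : ZMod p) = 0 := by
  rw [← hpt]; exact ZMod.natCast_self p

lemma three_eq : (3 : ZMod p) = -(2*t) := by
  have h := cast_p_zero hp hpt
  push_cast at h
  linear_combination h

lemma factor_ne_zero {m : ℕ} (hm : m < p) (hmt : m ≠ t) :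
    (2*(m:ZMod p)+3) ≠ 0 := by
  intro h
  have h' : ((2*m+3 : ℕ) : ZMod p) = 0 := by push_cast; linear_combination h
  rw [ZMod.natCast_eq_zero_iff] at h'
  obtain ⟨c, hc⟩ := h'
  have hc3 : c < 3 := by
    by_contra hcc
    push_neg at hcc
    have := Nat.mul_le_mul_left p hcc
    omega
  interval_cases c <;> omega

/-- The Wilson-type product. -/
lemma wilson_prod :
    ∏ m ∈ range p \ {t}, (2*(m:ZMod p)+3) = -1 := by
  haveI := Fact.mk hp
  have key : ∏ m ∈ range p \ {t}, (2*(m:ZMod p)+3) = ∏ x ∈ Ico 1 p, ((x:ℕ) : ZMod p) := by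
    refine prod_bij' (fun m _ => (2*(m:ZMod p)+3).val)
      (fun b _ => (((b:ZMod p) - 3) * (2:ZMod p)⁻¹).val) ?_ ?_ ?_ ?_ ?_
    · intro m hm
      simp only [mem_sdiff, mem_range, mem_singleton] at hm
      rw [mem_Ico]
      refine ⟨?_, ZMod.val_lt _⟩
      rw [Nat.one_le_iff_ne_zero, Ne, ZMod.val_eq_zero]
      exact factor_ne_zero hp hpt hm.1 hm.2
    · intro b hb
      simp only [mem_Ico] at hb
      simp only [mem_sdiff, mem_range, mem_singleton]
      refine ⟨ZMod.val_lt _, ?_⟩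
      intro h
      have h2 := two_ne_zero' hp hpt
      have hbz : ((b:ℕ) : ZMod p) ≠ 0 := by
        rw [Ne, ZMod.natCast_eq_zero_iff]
        intro hd
        have := Nat.le_of_dvd (by omega) hd
        omega
      apply hbz
      have h' : (((b:ZMod p) - 3) * (2:ZMod p)⁻¹) = (t : ZMod p) := by
        rw [← h, ZMod.natCast_rightInverse _]
      have h'' := congrArg (· * (2:ZMod p)) h'
      simp only [mul_assoc, inv_mul_cancel₀ h2, mul_one] at h''
      have h3 := three_eq hp hpt
      push_cast
      linear_combination h'' + h3
    · intro m hm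
      simp only [mem_sdiff, mem_range, mem_singleton] at hm
      have h2 := two_ne_zero' hp hpt
      show (((((2*(m:ZMod p)+3).val : ℕ) : ZMod p) - 3) * (2:ZMod p)⁻¹).val = m
      rw [ZMod.natCast_rightInverse _]
      have : (2*(m:ZMod p)+3-3) * (2:ZMod p)⁻¹ = (m : ZMod p) := by
        field_simp
        ring
      rw [this, ZMod.val_cast_of_lt hm.1]
    · intro b hb
      simp only [mem_Ico] at hb
      have h2 := two_ne_zero' hp hpt
      show (2 * ((((((b:ZMod p) - 3) * (2:ZMod p)⁻¹).val : ℕ)) : ZMod p) + 3).val = b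
      rw [ZMod.natCast_rightInverse _]
      have : 2 * (((b:ZMod p) - 3) * (2:ZMod p)⁻¹) + 3 = (b:ZMod p) := by
        field_simp
        ring
      rw [this, ZMod.val_cast_of_lt hb.2]
    · intro m hm
      show 2*(m:ZMod p)+3 = ((((2*(m:ZMod p)+3).val : ℕ)) : ZMod p)
      rw [ZMod.natCast_rightInverse _]
  rw [key, ZMod.prod_Ico_one_prime]

end


section

variable (hp : p.Prime) (hpt : p = 2*t+3)
include hp hpt

lemma cast_factor_t : ((2*(t:ZMod p)+3)) = 0 := by
  have h := cast_p_zero hp hpt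
  push_cast at h
  linear_combination h

lemma Pseq_val : ((Pseq p : ℤ) : ZMod p) = -1 := by
  haveI := Fact.mk hp
  have ht : t ∈ range p := by rw [mem_range]; omega
  rw [Pseq]
  push_cast
  rw [Finset.sum_eq_single t]
  · exact wilson_prod hp hpt
  · intro j hj hjt
    refine Finset.prod_eq_zero (i := t) ?_ ?_
    · simp only [mem_sdiff, mem_range, mem_singleton]
      exact ⟨by omega, fun h => hjt h.symm⟩
    · exact cast_factor_t hp hpt
  · intro h; exact absurd ht h

lemma Rseq_val : ((Rseq p : ℤ) : ZMod p) = -(t : ZMod p) := by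
  haveI := Fact.mk hp
  have ht : t ∈ range p := by rw [mem_range]; omega
  rw [Rseq]
  push_cast
  rw [Finset.sum_eq_single t]
  · rw [wilson_prod hp hpt]; ring
  · intro j hj hjt
    rw [Finset.prod_eq_zero (i := t) (by
        simp only [mem_sdiff, mem_range, mem_singleton]
        exact ⟨by omega, fun h => hjt h.symm⟩) (cast_factor_t hp hpt), mul_zero]
  · intro h; exact absurd ht h

lemma alphaP_val : ((alphaP p : ℤ) : ZMod p) = 0 := by
  rw [alphaP]
  push_cast
  refine Finset.prod_eq_zero (i := t+1) (by rw [mem_range]; omega) ?_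
  have h := cast_p_zero hp hpt
  push_cast at h ⊢
  linear_combination h

lemma betaSeq_val : ((betaSeq p : ℤ) : ZMod p) = 0 := by
  rw [betaSeq]
  push_cast
  rw [dfOdd, dfEven]
  push_cast
  rw [Finset.prod_eq_zero (i := t) (by rw [mem_range]; omega) (cast_factor_t hp hpt)]
  rw [Finset.prod_eq_zero (i := 2*t+2) (by rw [mem_range]; omega) (by
    have h := cast_p_zero hp hpt
    push_cast at h ⊢
    linear_combination 2*h)]
  ring

/-- The staircase identity. -/
lemma KI : ∀ j, j < p →
    (((j+1).factorial : ℕ) : ZMod p) * ∏ m ∈ Finset.Ico (j+1) p, ((m:ZMod p) - t)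
    = (((t+2).factorial : ℕ) : ZMod p) * ∏ i ∈ range (t+1), ((j:ZMod p)+1 - i) := by
  haveI := Fact.mk hp
  have main : ∀ j, t ≤ j → j < p →
      (((j+1).factorial : ℕ) : ZMod p) * ∏ m ∈ Finset.Ico (j+1) p, ((m:ZMod p) - t)
      = (((t+2).factorial : ℕ) : ZMod p) * ∏ i ∈ range (t+1), ((j:ZMod p)+1 - i) := by
    intro j hj
    induction j, hj using Nat.le_induction with
    | base =>
      intro _
      have L : ∏ m ∈ Finset.Ico (t+1) p, ((m:ZMod p) - t)
          = (((t+2).factorial : ℕ) : ZMod p) := by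
        rw [Finset.prod_Ico_eq_prod_range, show p - (t+1) = t+2 from by omega]
        rw [Finset.prod_congr rfl (fun i _ => show (((t+1+i:ℕ)):ZMod p) - t = ((i:ZMod p)+1) from by
          push_cast; ring)]
        rw [← Finset.prod_range_add_one_eq_factorial (t+2)]
        push_cast
        rfl
      have Rt : ∏ i ∈ range (t+1), ((t:ZMod p)+1 - i)
          = (((t+1).factorial : ℕ) : ZMod p) := by
        calc ∏ i ∈ range (t+1), ((t:ZMod p)+1-i)
            = ∏ i ∈ range (t+1), (((t-i : ℕ) : ZMod p)+1) := by
              refine Finset.prod_congr rfl (fun i hi => ?_)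
              have hi' : i ≤ t := by have := mem_range.mp hi; omega
              push_cast [hi']
              ring
          _ = ∏ i ∈ range (t+1), ((i:ZMod p)+1) :=
              Finset.prod_range_reflect (fun j => ((j:ZMod p)+1)) (t+1)
          _ = (((t+1).factorial : ℕ) : ZMod p) := by
              rw [← Finset.prod_range_add_one_eq_factorial (t+1)]
              push_cast
              rfl
      rw [L, Rt, mul_comm]
    | succ j hj ih =>
      intro hj1
      have hjp : j < p := by omega
      have IH := ih hjp
      set A := ∏ m ∈ Finset.Ico (j+1+1) p, ((m:ZMod p) - t) with hA
      set B := ∏ i ∈ range (t+1), ((j:ZMod p)+1 - i) with hB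
      have hcc : ((j:ZMod p) + 1 - t) ≠ 0 := by
        have hcast : (((j+1-t : ℕ)) : ZMod p) = ((j:ZMod p) + 1 - t) := by
          push_cast [show t ≤ j+1 from by omega]
          ring
        rw [← hcast, Ne, ZMod.natCast_eq_zero_iff]
        intro hd
        have := Nat.le_of_dvd (by omega) hd
        omega
      apply mul_right_cancel₀ hcc
      have hsplit : ∏ m ∈ Finset.Ico (j+1) p, ((m:ZMod p) - t)
          = ((j:ZMod p)+1 - t) * A := by
        rw [Finset.prod_eq_prod_Ico_succ_bot hj1]
        push_cast
        ring
      have hfac : (((j+1+1).factorial : ℕ) : ZMod p)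
          = ((j:ZMod p)+2) * (((j+1).factorial : ℕ) : ZMod p) := by
        rw [Nat.factorial_succ]
        push_cast
        ring
      -- right side manipulation
      set y : ZMod p := (j:ZMod p) + 2 with hy
      have h1 : ∏ i ∈ range (t+2), (y - (i:ZMod p))
          = (∏ i ∈ range (t+1), (y - (i:ZMod p))) * (y - ((t+1 : ℕ):ZMod p)) := by
        rw [Finset.prod_range_succ]
      have h2 : ∏ i ∈ range (t+2), (y - (i:ZMod p))
          = (∏ i ∈ range (t+1), (y - ((i+1 : ℕ):ZMod p))) * (y - ((0:ℕ):ZMod p)) := by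
        rw [Finset.prod_range_succ']
      have h3 : ∏ i ∈ range (t+1), (y - ((i+1:ℕ):ZMod p)) = B := by
        refine Finset.prod_congr rfl (fun i _ => ?_)
        push_cast [hy]
        ring
      have hRa : ∏ i ∈ range (t+1), ((((j+1:ℕ)):ZMod p)+1 - (i:ZMod p))
          = ∏ i ∈ range (t+1), (y - (i:ZMod p)) := by
        refine Finset.prod_congr rfl (fun i _ => ?_)
        push_cast [hy]
        ring
      have hcc2 : ((j:ZMod p)+1-(t:ZMod p)) = y - ((t+1:ℕ):ZMod p) := by
        push_cast [hy]
        ring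
      calc (((j+1+1).factorial : ℕ) : ZMod p) * A * ((j:ZMod p)+1-(t:ZMod p))
          = y * ((((j+1).factorial : ℕ) : ZMod p) * (((j:ZMod p)+1 - t) * A)) := by
            rw [hfac]; ring
        _ = y * ((((j+1).factorial : ℕ) : ZMod p) * ∏ m ∈ Finset.Ico (j+1) p, ((m:ZMod p) - t)) := by
            rw [← hsplit]
        _ = y * ((((t+2).factorial : ℕ) : ZMod p) * B) := by rw [IH]
        _ = (((t+2).factorial : ℕ) : ZMod p) * (B * (y - ((0:ℕ):ZMod p))) := by
            push_cast; ring
        _ = (((t+2).factorial : ℕ) : ZMod p) * ((∏ i ∈ range (t+1), (y - ((i+1:ℕ):ZMod p))) * (y - ((0:ℕ):ZMod p))) := by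
            rw [h3]
        _ = (((t+2).factorial : ℕ) : ZMod p) * ∏ i ∈ range (t+2), (y - (i:ZMod p)) := by
            rw [← h2]
        _ = (((t+2).factorial : ℕ) : ZMod p) * ((∏ i ∈ range (t+1), (y - (i:ZMod p))) * (y - ((t+1:ℕ):ZMod p))) := by
            rw [h1]
        _ = (((t+2).factorial : ℕ) : ZMod p) * (∏ i ∈ range (t+1), ((((j+1:ℕ)):ZMod p)+1 - (i:ZMod p))) * ((j:ZMod p)+1-(t:ZMod p)) := by
            rw [hRa, hcc2]; ring
  intro j hjp
  rcases lt_or_ge j t with h | h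
  · -- zero case
    rw [Finset.prod_eq_zero (i := t)
        (by rw [Finset.mem_Ico]; omega)
        (by rw [sub_self])]
    rw [Finset.prod_eq_zero (i := j+1) (by rw [mem_range]; omega)
        (by push_cast; ring)]
    simp
  · exact main j h hjp

end


section

variable (hp : p.Prime) (hpt : p = 2*t+3)
include hp

lemma zmod_sum_range [NeZero p] (F : ZMod p → ZMod p) :
    ∑ j ∈ range p, F ((j:ℕ) : ZMod p) = ∑ x : ZMod p, F x := by
  refine Finset.sum_nbij' (i := fun m => ((m:ℕ) : ZMod p)) (j := fun x => x.val)
    ?_ ?_ ?_ ?_ ?_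
  · intro a _; exact Finset.mem_univ _
  · intro x _; rw [mem_range]; exact ZMod.val_lt x
  · intro a ha; exact ZMod.val_cast_of_lt (mem_range.mp ha)
  · intro x _; exact ZMod.natCast_rightInverse x
  · intro a _; rfl

omit hp in
lemma sum_eval_zero [NeZero p] [Fact p.Prime] (f : Polynomial (ZMod p)) (hdeg : f.natDegree < p - 1) :
    ∑ x : ZMod p, f.eval x = 0 := by
  have hev : ∀ x : ZMod p, f.eval x = ∑ e ∈ range (f.natDegree + 1), f.coeff e * x^e :=
    fun x => Polynomial.eval_eq_sum_range x
  rw [Finset.sum_congr rfl (fun x _ => hev x), Finset.sum_comm]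
  refine Finset.sum_eq_zero (fun e he => ?_)
  rw [← Finset.mul_sum]
  have hz : ∑ x : ZMod p, x^e = 0 := by
    refine FiniteField.sum_pow_lt_card_sub_one (K := ZMod p) e ?_
    rw [ZMod.card]
    have := mem_range.mp he
    omega
  rw [hz, mul_zero]

include hpt in
lemma sum_prod_range_zero [NeZero p] :
    ∑ x : ZMod p, ∏ i ∈ range (t+1), (x - (i:ZMod p)) = 0 := by
  haveI := Fact.mk hp
  set f : Polynomial (ZMod p) :=
    ∏ i ∈ range (t+1), (Polynomial.X - Polynomial.C ((i:ℕ):ZMod p)) with hf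
  have hev : ∀ x : ZMod p, f.eval x = ∏ i ∈ range (t+1), (x - (i:ZMod p)) := by
    intro x
    simp [hf, Polynomial.eval_prod]
  have hdeg : f.natDegree = t+1 := by
    rw [hf, Polynomial.natDegree_prod_of_monic _ _
      (fun i _ => Polynomial.monic_X_sub_C _)]
    rw [Finset.sum_congr rfl (fun x _ =>
      show (Polynomial.X - ((x:ℕ) : Polynomial (ZMod p))).natDegree = 1 from by
        rw [← Polynomial.C_eq_natCast]
        exact Polynomial.natDegree_X_sub_C _)]
    simp
  calc ∑ x : ZMod p, ∏ i ∈ range (t+1), (x - (i:ZMod p))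
      = ∑ x : ZMod p, f.eval x := Finset.sum_congr rfl (fun x _ => (hev x).symm)
    _ = 0 := sum_eval_zero f (by rw [hdeg]; omega)

include hpt in
lemma Gseq_val : ((Gseq p : ℤ) : ZMod p) = 0 := by
  haveI := Fact.mk hp
  rw [Gseq]
  push_cast
  have hterm : ∀ j ∈ range p,
      ((dfEven (j+1) : ℤ) : ZMod p) * ∏ m ∈ Finset.Ico (j+1) p, (2*(m:ZMod p)+3)
      = (2 * (((t+2).factorial : ℕ) : ZMod p)) * ∏ i ∈ range (t+1), ((j:ZMod p)+1-(i:ZMod p)) := by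
    intro j hj
    have hjp := mem_range.mp hj
    have hE : ((dfEven (j+1) : ℤ) : ZMod p)
        = 2^(j+1) * (((j+1).factorial : ℕ) : ZMod p) := by
      rw [dfEven_eq]
      push_cast
      ring
    have h3 := three_eq hp hpt
    have hprod : ∏ m ∈ Finset.Ico (j+1) p, (2*(m:ZMod p)+3)
        = 2^(p-(j+1)) * ∏ m ∈ Finset.Ico (j+1) p, ((m:ZMod p) - t) := by
      calc ∏ m ∈ Finset.Ico (j+1) p, (2*(m:ZMod p)+3)
          = ∏ m ∈ Finset.Ico (j+1) p, (2*((m:ZMod p) - t)) :=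
            Finset.prod_congr rfl (fun m _ => by rw [h3]; ring)
        _ = 2^(p-(j+1)) * ∏ m ∈ Finset.Ico (j+1) p, ((m:ZMod p) - t) := by
            rw [Finset.prod_mul_distrib, Finset.prod_const, Nat.card_Ico]
    have hpow : (2:ZMod p)^(j+1) * 2^(p-(j+1)) = 2 := by
      rw [← pow_add, show j+1 + (p-(j+1)) = p from by omega]
      exact ZMod.pow_card 2
    have hKI := KI hp hpt j hjp
    calc ((dfEven (j+1) : ℤ) : ZMod p) * ∏ m ∈ Finset.Ico (j+1) p, (2*(m:ZMod p)+3)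
        = ((2:ZMod p)^(j+1) * 2^(p-(j+1))) *
            ((((j+1).factorial : ℕ) : ZMod p) * ∏ m ∈ Finset.Ico (j+1) p, ((m:ZMod p) - t)) := by
          rw [hE, hprod]; ring
      _ = 2 * ((((t+2).factorial : ℕ) : ZMod p) * ∏ i ∈ range (t+1), ((j:ZMod p)+1-(i:ZMod p))) := by
          rw [hpow, hKI]
      _ = (2 * (((t+2).factorial : ℕ) : ZMod p)) * ∏ i ∈ range (t+1), ((j:ZMod p)+1-(i:ZMod p)) := by
          ring
  rw [Finset.sum_congr rfl hterm, ← Finset.mul_sum]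
  haveI : NeZero p := ⟨hp.pos.ne'⟩
  have hsum : ∑ j ∈ range p, ∏ i ∈ range (t+1), ((j:ZMod p)+1-(i:ZMod p)) = 0 := by
    calc ∑ j ∈ range p, ∏ i ∈ range (t+1), ((j:ZMod p)+1-(i:ZMod p))
        = ∑ x : ZMod p, ∏ i ∈ range (t+1), (x+1-(i:ZMod p)) :=
          zmod_sum_range hp (fun x : ZMod p => ∏ i ∈ range (t+1), (x+1-(i:ZMod p)))
      _ = ∑ y : ZMod p, ∏ i ∈ range (t+1), (y-(i:ZMod p)) := by
          refine Fintype.sum_bijective (fun x : ZMod p => x + 1) ?_ _ _ (fun x => rfl)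
          exact (Equiv.addRight (1 : ZMod p)).bijective
      _ = 0 := sum_prod_range_zero hp hpt
  rw [hsum, mul_zero]

include hpt in
lemma Qseq_val : ((Qseq p : ℤ) : ZMod p) = 1 := by
  haveI := Fact.mk hp
  rw [Qseq]
  push_cast
  rw [Pseq_val hp hpt, Rseq_val hp hpt, Gseq_val hp hpt]
  have h := cast_p_zero hp hpt
  push_cast at h
  linear_combination -h

end


open PowerSeries

noncomputable def PScomp {R : Type*} [CommSemiring R] (f g : PowerSeries R) :
    PowerSeries R :=
  PowerSeries.mk fun n =>
    ∑ i ∈ Finset.range (n + 1), PowerSeries.coeff i f * PowerSeries.coeff n (g ^ i)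

section PS

variable {k : Type*} [Field k] (g : PowerSeries k) (a2 a3 a4 : k)

/-- the unit part: `g = X * usr g` when `g` has zero constant term -/
noncomputable def usr : PowerSeries k := PowerSeries.mk fun n => coeff (n+1) g

variable (h0 : coeff 0 g = 0) (h1 : coeff 1 g = 1) (h2 : coeff 2 g = 0)
  (h3 : coeff 3 g = a2) (h4 : coeff 4 g = a3) (h5 : coeff 5 g = a4)

include h0 in
lemma g_eq : g = X * usr g := by
  ext n
  cases n with
  | zero => rw [h0]; simp
  | succ m => rw [coeff_succ_X_mul, usr, coeff_mk]

include h0 in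
lemma coeff_g_pow (i d : ℕ) : coeff (i + d) (g ^ i) = coeff d ((usr g) ^ i) := by
  conv_lhs => rw [g_eq g h0, mul_pow, Nat.add_comm i d, coeff_X_pow_mul]

include h0 in
lemma coeff_g_pow_lt {i d : ℕ} (h : d < i) : coeff d (g ^ i) = 0 := by
  rw [g_eq g h0, mul_pow, coeff_X_pow_mul']
  simp [Nat.not_le.mpr h]

include h0 h1 in
lemma coeff_g_pow_self (d : ℕ) : coeff d (g ^ d) = 1 := by
  have := coeff_g_pow g h0 d 0
  rw [Nat.add_zero] at this
  rw [this]
  have : (constantCoeff) ((usr g)^d) = 1 := by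
    rw [map_pow]
    rw [← coeff_zero_eq_constantCoeff_apply, usr, coeff_mk, h1, one_pow]
  rw [← this, ← coeff_zero_eq_constantCoeff_apply]

-- small coefficients of products
lemma coeff_mul_one' (A B : PowerSeries k) :
    coeff 1 (A * B) = coeff 0 A * coeff 1 B + coeff 1 A * coeff 0 B := by
  rw [coeff_mul, Finset.Nat.sum_antidiagonal_eq_sum_range_succ_mk]
  simp [Finset.sum_range_succ]

lemma coeff_mul_two' (A B : PowerSeries k) :
    coeff 2 (A * B) = coeff 0 A * coeff 2 B + coeff 1 A * coeff 1 B
      + coeff 2 A * coeff 0 B := by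
  rw [coeff_mul, Finset.Nat.sum_antidiagonal_eq_sum_range_succ_mk]
  rw [Finset.sum_range_succ, Finset.sum_range_succ, Finset.sum_range_succ,
    Finset.sum_range_zero]
  norm_num

lemma coeff_mul_three' (A B : PowerSeries k) :
    coeff 3 (A * B) = coeff 0 A * coeff 3 B + coeff 1 A * coeff 2 B
      + coeff 2 A * coeff 1 B + coeff 3 A * coeff 0 B := by
  rw [coeff_mul, Finset.Nat.sum_antidiagonal_eq_sum_range_succ_mk]
  rw [Finset.sum_range_succ, Finset.sum_range_succ, Finset.sum_range_succ,
    Finset.sum_range_succ, Finset.sum_range_zero]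
  norm_num

lemma coeff_mul_four' (A B : PowerSeries k) :
    coeff 4 (A * B) = coeff 0 A * coeff 4 B + coeff 1 A * coeff 3 B
      + coeff 2 A * coeff 2 B + coeff 3 A * coeff 1 B + coeff 4 A * coeff 0 B := by
  rw [coeff_mul, Finset.Nat.sum_antidiagonal_eq_sum_range_succ_mk]
  rw [Finset.sum_range_succ, Finset.sum_range_succ, Finset.sum_range_succ,
    Finset.sum_range_succ, Finset.sum_range_succ, Finset.sum_range_zero]
  norm_num

include h1 in
lemma usr0 : coeff 0 (usr g) = 1 := by rw [usr, coeff_mk, h1]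
include h2 in
lemma usr1 : coeff 1 (usr g) = 0 := by rw [usr, coeff_mk, h2]
include h3 in
lemma usr2 : coeff 2 (usr g) = a2 := by rw [usr, coeff_mk, h3]
include h4 in
lemma usr3 : coeff 3 (usr g) = a3 := by rw [usr, coeff_mk, h4]
include h5 in
lemma usr4 : coeff 4 (usr g) = a4 := by rw [usr, coeff_mk, h5]

include h1 in
lemma upow0 (i : ℕ) : coeff 0 ((usr g)^i) = 1 := by
  rw [coeff_zero_eq_constantCoeff_apply, map_pow]
  rw [← coeff_zero_eq_constantCoeff_apply, usr0 g h1, one_pow]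

include h1 h2 in
lemma upow1 (i : ℕ) : coeff 1 ((usr g)^i) = 0 := by
  induction i with
  | zero => simp
  | succ n ih =>
    rw [pow_succ, coeff_mul_one', ih, upow0 g h1, usr1 g h2]
    ring

include h1 h2 h3 in
lemma upow2 (i : ℕ) : coeff 2 ((usr g)^i) = (i:k) * a2 := by
  induction i with
  | zero => simp
  | succ n ih =>
    rw [pow_succ, coeff_mul_two', ih, upow0 g h1, upow1 g h1 h2, usr0 g h1,
      usr1 g h2, usr2 g a2 h3]
    push_cast
    ring

include h1 h2 h3 h4 in
lemma upow3 (i : ℕ) : coeff 3 ((usr g)^i) = (i:k) * a3 := by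
  induction i with
  | zero => simp
  | succ n ih =>
    rw [pow_succ, coeff_mul_three', ih, upow0 g h1, upow1 g h1 h2,
      upow2 g a2 h1 h2 h3, usr0 g h1, usr1 g h2, usr2 g a2 h3, usr3 g a3 h4]
    push_cast
    ring

include h1 h2 h3 h4 h5 in
lemma upow4 (i : ℕ) : coeff 4 ((usr g)^i)
    = (i:k) * a4 + ((i.choose 2 : ℕ) : k) * a2^2 := by
  induction i with
  | zero => simp
  | succ n ih =>
    rw [pow_succ, coeff_mul_four', ih, upow0 g h1, upow1 g h1 h2,
      upow2 g a2 h1 h2 h3, upow3 g a2 a3 h1 h2 h3 h4, usr0 g h1, usr1 g h2,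
      usr2 g a2 h3, usr3 g a3 h4, usr4 g a4 h5]
    rw [Nat.choose_succ_succ, Nat.choose_one_right]
    push_cast
    ring


/-- chain sums -/
noncomputable def Wf (g : PowerSeries k) : ℕ → ℕ → k
  | 0, _ => 0
  | 1, d => coeff d g - coeff d X
  | (r+2), d => ∑ i ∈ range d, Wf g (r+1) i * coeff d (g^i)

lemma Wf_zero (d : ℕ) : Wf g 0 d = 0 := rfl
lemma Wf_one (d : ℕ) : Wf g 1 d = coeff d g - coeff d X := rfl
lemma Wf_succ (r d : ℕ) :
    Wf g (r+2) d = ∑ i ∈ range d, Wf g (r+1) i * coeff d (g^i) := rfl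

/-- generic Pascal resummation -/
lemma pascal_sum (w : ℕ → k) (hw0 : w 0 = 0) (n : ℕ) :
    ∑ r ∈ range (n+2), ((n+1).choose r : k) * w r
    = ∑ r ∈ range (n+1), (n.choose r : k) * (w r + w (r+1)) := by
  rw [Finset.sum_range_succ']
  simp only [Nat.choose_succ_succ, Nat.choose_zero_right, hw0, mul_zero, add_zero]
  have hsplit : ∀ r ∈ range (n+1),
      ((n.choose r + n.choose (r+1) : ℕ) : k) * w (r+1)
      = (n.choose r : k) * w (r+1) + (n.choose (r+1) : k) * w (r+1) := by
    intro r _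
    push_cast
    ring
  rw [Finset.sum_congr rfl hsplit, Finset.sum_add_distrib]
  have h2 : ∑ r ∈ range (n+1), ((n.choose (r+1) : ℕ) : k) * w (r+1)
      = ∑ r ∈ range (n+1), ((n.choose r : ℕ) : k) * w r := by
    have e1 := Finset.sum_range_succ' (fun r => ((n.choose r : ℕ) : k) * w r) (n+1)
    have e2 := Finset.sum_range_succ (fun r => ((n.choose r : ℕ) : k) * w r) (n+1)
    rw [e2] at e1
    simpa [hw0, Nat.choose_succ_self] using e1.symm
  rw [h2, ← Finset.sum_add_distrib]
  refine Finset.sum_congr rfl (fun r _ => by ring)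

include h0 h1 in
lemma inner_sum (r d : ℕ) :
    ∑ i ∈ range (d+1), Wf g (r+1) i * coeff d (g^i)
    = Wf g (r+2) d + Wf g (r+1) d := by
  rw [Finset.sum_range_succ, Wf_succ, coeff_g_pow_self g h0 h1, mul_one]

include h0 in
lemma piece1 (d : ℕ) :
    ∑ i ∈ range (d+1), coeff i X * coeff d (g^i) = coeff d g := by
  rcases Nat.eq_zero_or_pos d with hd | hd
  · subst hd
    rw [Finset.sum_range_one]
    simp [h0]
  · rw [Finset.sum_eq_single 1]
    · rw [coeff_X, if_pos rfl, pow_one, one_mul]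
    · intro i _ hi
      rw [coeff_X, if_neg hi, zero_mul]
    · intro h
      exact absurd (Finset.mem_range.mpr (by omega)) h

lemma compIterate_coeff (h : PowerSeries k) (d : ℕ) :
    coeff d (PScomp h g) = ∑ i ∈ range (d+1), coeff i h * coeff d (g^i) := by
  rw [PScomp, coeff_mk]

include h0 h1 in
lemma main_identity (n d : ℕ) :
    coeff d ((fun h => PScomp h g)^[n] X)
    = coeff d X + ∑ r ∈ range (n+1), (n.choose r : k) * Wf g r d := by
  induction n generalizing d with
  | zero => simp [Wf_zero]
  | succ n ih =>
    rw [Function.iterate_succ_apply', compIterate_coeff]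
    have expand : ∀ i ∈ range (d+1),
        coeff i ((fun h => PScomp h g)^[n] X) * coeff d (g^i)
        = coeff i X * coeff d (g^i)
          + ∑ r ∈ range (n+1), (n.choose r : k) * (Wf g r i * coeff d (g^i)) := by
      intro i _
      rw [ih i, add_mul, Finset.sum_mul]
      congr 1
      refine Finset.sum_congr rfl (fun r _ => by ring)
    rw [Finset.sum_congr rfl expand, Finset.sum_add_distrib, piece1 g h0]
    rw [Finset.sum_comm]
    have inner_eval : ∀ r ∈ range (n+1),
        ∑ i ∈ range (d+1), (n.choose r : k) * (Wf g r i * coeff d (g^i))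
        = (n.choose r : k) * (Wf g (r+1) d + Wf g r d) - (if r = 0 then Wf g 1 d else 0) := by
      intro r _
      rw [← Finset.mul_sum]
      cases r with
      | zero =>
        simp only [Wf_zero, zero_mul, Finset.sum_const_zero, mul_zero, if_pos rfl]
        rw [Nat.choose_zero_right]
        push_cast
        ring
      | succ m =>
        rw [inner_sum g h0 h1, if_neg (Nat.succ_ne_zero m)]
        ring
    rw [Finset.sum_congr rfl inner_eval, Finset.sum_sub_distrib]
    rw [Finset.sum_ite_eq' (range (n+1)) 0 (fun _ => Wf g 1 d)]
    rw [if_pos (Finset.mem_range.mpr (by omega))]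
    rw [pascal_sum (fun r => Wf g r d) (Wf_zero g d) n]
    have final : ∀ r ∈ range (n+1),
        (n.choose r : k) * (Wf g r d + Wf g (r+1) d)
        = (n.choose r : k) * (Wf g (r+1) d + Wf g r d) := fun r _ => by ring
    rw [Finset.sum_congr rfl final, Wf_one]
    ring


include h0 h1 h2 in
lemma Wf_support : ∀ r d, d < 2*r+3 → Wf g (r+1) d = 0 := by
  intro r
  induction r with
  | zero =>
    intro d hd
    rw [Wf_one]
    interval_cases d <;> simp [h0, h1, h2, coeff_X]
  | succ r ih =>
    intro d hd
    rw [Wf_succ]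
    refine Finset.sum_eq_zero (fun i hi => ?_)
    have hi' := Finset.mem_range.mp hi
    rcases lt_or_ge i (2*r+3) with h | h
    · rw [ih i h, zero_mul]
    · have hieq : i = 2*r+3 ∧ d = 2*r+4 := by omega
      rw [hieq.1, hieq.2, show 2*r+4 = (2*r+3)+1 from by omega,
        coeff_g_pow g h0, upow1 g h1 h2, mul_zero]

include h0 h1 h2 h3 in
lemma WA : ∀ r, Wf g (r+1) (2*r+3) = ((alphaP (r+1) : ℤ) : k) * a2^(r+1) := by
  intro r
  induction r with
  | zero =>
    rw [Wf_one, h3]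
    have : (alphaP 1 : ℤ) = 1 := by simp [alphaP]
    rw [this, coeff_X, if_neg (by omega)]
    norm_num
  | succ r ih =>
    rw [Wf_succ, show 2*(r+1)+3 = ((2*r+3)+1)+1 from by omega, Finset.sum_range_succ,
      Finset.sum_range_succ]
    rw [Finset.sum_eq_zero (fun i hi => by
      rw [Wf_support g h0 h1 h2 r i (Finset.mem_range.mp hi), zero_mul])]
    rw [show (2*r+3)+1+1 = (2*r+3)+2 from rfl]
    rw [show ((2*r+3)+2 : ℕ) = (2*r+3)+2 from rfl]
    rw [coeff_g_pow g h0 (2*r+3) 2, upow2 g a2 h1 h2 h3]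
    rw [show (2*r+3)+2 = ((2*r+3)+1)+1 from rfl]
    rw [coeff_g_pow g h0 ((2*r+3)+1) 1, upow1 g h1 h2]
    rw [ih]
    have hcast : ((alphaP (r+2) : ℤ) : k) = ((alphaP (r+1) : ℤ) : k) * (2*(r+1)+1 : k) := by
      rw [alphaP_succ (r+1)]
      push_cast
      ring
    rw [hcast]
    push_cast
    ring

include h0 h1 h2 h3 h4 in
lemma WB : ∀ r, Wf g (r+1) (2*r+4) = ((betaSeq (r+1) : ℤ) : k) * a3 * a2^r := by
  intro r
  induction r with
  | zero =>
    rw [Wf_one, h4]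
    have : (betaSeq 1 : ℤ) = 1 := by simp [betaSeq, dfOdd, dfEven]
    rw [this, coeff_X, if_neg (by omega)]
    norm_num
  | succ r ih =>
    rw [Wf_succ, show 2*(r+1)+4 = (((2*r+3)+1)+1)+1 from by omega, Finset.sum_range_succ,
      Finset.sum_range_succ, Finset.sum_range_succ]
    rw [Finset.sum_eq_zero (fun i hi => by
      rw [Wf_support g h0 h1 h2 r i (Finset.mem_range.mp hi), zero_mul])]
    rw [show ((2*r+3)+1+1)+1 = (2*r+3)+3 from rfl]
    rw [coeff_g_pow g h0 (2*r+3) 3, upow3 g a2 a3 h1 h2 h3 h4]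
    rw [show (2*r+3)+3 = ((2*r+3)+1)+2 from rfl]
    rw [coeff_g_pow g h0 ((2*r+3)+1) 2, upow2 g a2 h1 h2 h3]
    rw [show ((2*r+3)+1)+2 = ((2*r+3)+2)+1 from rfl]
    rw [coeff_g_pow g h0 ((2*r+3)+2) 1, upow1 g h1 h2]
    rw [ih, show (2*r+3) = 2*r+3 from rfl]
    rw [show 2*r+4 = (2*r+3)+1 from by omega] at ih ⊢
    rw [WA g a2 h0 h1 h2 h3 r]
    have hcast : ((betaSeq (r+2) : ℤ) : k)
        = (2*(r+1)+2 : k) * ((betaSeq (r+1) : ℤ) : k) + (2*(r+1)+1 : k) * ((alphaP (r+1) : ℤ) : k) := by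
      rw [betaSeq_succ (r+1)]
      push_cast
      ring
    rw [hcast]
    push_cast
    ring


lemma choose_two_val (r : ℕ) : (2*r+5).choose 2 = (r+2)*(2*r+5) := by
  have h1 : 2*r+5-1 = 2*r+4 := by omega
  rw [Nat.choose_two_right, h1, show (2*r+5)*(2*r+4) = ((r+2)*(2*r+5))*2 from by ring]
  exact Nat.mul_div_cancel _ (by norm_num)

include h0 h1 h2 in
lemma WC_expand (r : ℕ) : Wf g (r+2) (2*r+7)
    = Wf g (r+1) (2*r+3) * coeff 4 ((usr g)^(2*r+3))
      + Wf g (r+1) (2*r+4) * coeff 3 ((usr g)^(2*r+4))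
      + Wf g (r+1) (2*r+5) * coeff 2 ((usr g)^(2*r+5)) := by
  rw [Wf_succ, show 2*r+7 = ((((2*r+3)+1)+1)+1)+1 from by omega, Finset.sum_range_succ,
    Finset.sum_range_succ, Finset.sum_range_succ, Finset.sum_range_succ]
  rw [Finset.sum_eq_zero (fun i hi => by
    rw [Wf_support g h0 h1 h2 r i (Finset.mem_range.mp hi), zero_mul])]
  rw [show (((2*r+3)+1)+1)+1+1 = (2*r+3)+4 from rfl]
  rw [coeff_g_pow g h0 (2*r+3) 4]
  rw [show (2*r+3)+4 = ((2*r+3)+1)+3 from rfl]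
  rw [coeff_g_pow g h0 ((2*r+3)+1) 3]
  rw [show ((2*r+3)+1)+3 = ((2*r+3)+2)+2 from rfl]
  rw [coeff_g_pow g h0 ((2*r+3)+2) 2]
  rw [show ((2*r+3)+2)+2 = ((2*r+3)+3)+1 from rfl]
  rw [coeff_g_pow g h0 ((2*r+3)+3) 1, upow1 g h1 h2, mul_zero, add_zero]
  norm_num

lemma Pseq_one : Pseq 1 = 1 := by
  have : range 1 \ {(0:ℕ)} = ∅ := by decide
  simp [Pseq, this]

lemma Rseq_one : Rseq 1 = 0 := by
  have : range 1 \ {(0:ℕ)} = ∅ := by decide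
  simp [Rseq, this]

lemma Gseq_one : Gseq 1 = 2 := by
  have : Finset.Ico 1 1 = (∅ : Finset ℕ) := by decide
  simp [Gseq, this, dfEven]

lemma dfOdd_one : dfOdd 1 = 3 := by simp [dfOdd]
lemma alphaP_one : alphaP 1 = 1 := by simp [alphaP]
lemma betaSeq_one : betaSeq 1 = 1 := by simp [betaSeq, dfOdd, dfEven]

lemma Pseq_two : Pseq 2 = 8 := by
  rw [show (2:ℕ) = 1+1 from rfl, Pseq_succ, Pseq_one, dfOdd_one]; norm_num

lemma Rseq_two : Rseq 2 = 3 := by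
  rw [show (2:ℕ) = 1+1 from rfl, Rseq_succ, Rseq_one, dfOdd_one]; norm_num

lemma Qseq_two : Qseq 2 = 4 := by
  have hg2 : Gseq 2 = 18 := by
    rw [show (2:ℕ) = 1+1 from rfl, Gseq_succ, Gseq_one]
    simp [dfEven]
    norm_num
  rw [Qseq, Pseq_two, Rseq_two, hg2]
  norm_num

include h0 h1 h2 h3 h4 h5 in
lemma WC : ∀ r, Wf g (r+2) (2*r+7)
    = ((Pseq (r+2) : ℤ) : k) * a4 * a2^(r+1)
      + ((Qseq (r+2) : ℤ) : k) * a3^2 * a2^r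
      + ((Rseq (r+2) : ℤ) : k) * a2^(r+3) := by
  intro r
  induction r with
  | zero =>
    rw [WC_expand g h0 h1 h2 0]
    rw [show 2*0+3 = 2*0+3 from rfl]
    rw [WA g a2 h0 h1 h2 h3 0, WB g a2 a3 h0 h1 h2 h3 h4 0]
    rw [show 2*0+5 = 5 from rfl, show (0:ℕ)+1 = 1 from rfl]
    rw [Wf_one, h5, coeff_X, if_neg (by omega)]
    rw [upow4 g a2 a3 a4 h1 h2 h3 h4 h5, upow3 g a2 a3 h1 h2 h3 h4,
      upow2 g a2 h1 h2 h3]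
    rw [alphaP_one, betaSeq_one, Pseq_two, Qseq_two, Rseq_two]
    norm_num
    ring
  | succ r ih =>
    have hexp := WC_expand g h0 h1 h2 (r+1)
    rw [show 2*(r+1)+3 = 2*r+5 from by omega, show 2*(r+1)+4 = 2*r+6 from by omega,
      show 2*(r+1)+5 = 2*r+7 from by omega, show (r+1)+1 = r+2 from by omega] at hexp
    rw [hexp]
    have hA := WA g a2 h0 h1 h2 h3 (r+1)
    rw [show 2*(r+1)+3 = 2*r+5 from by omega, show (r+1)+1 = r+2 from by omega] at hA
    have hB := WB g a2 a3 h0 h1 h2 h3 h4 (r+1)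
    rw [show 2*(r+1)+4 = 2*r+6 from by omega, show (r+1)+1 = r+2 from by omega] at hB
    rw [hA, hB, ih]
    rw [upow4 g a2 a3 a4 h1 h2 h3 h4 h5 (2*r+5), choose_two_val r,
      upow3 g a2 a3 h1 h2 h3 h4 (2*r+6), upow2 g a2 h1 h2 h3 (2*r+7)]
    rw [show (r+1)+2 = r+3 from by omega]
    have hPc : ((Pseq (r+3) : ℤ) : k)
        = (2*(r:k)+7) * ((Pseq (r+2) : ℤ) : k) + (2*(r:k)+5) * ((alphaP (r+2) : ℤ) : k) := by
      have h := Pseq_succ (r+2)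
      rw [dfOdd_eq (r+2), show (r+2)+1 = r+3 from by omega] at h
      rw [h]
      push_cast
      ring
    have hQc : ((Qseq (r+3) : ℤ) : k)
        = (2*(r:k)+7) * ((Qseq (r+2) : ℤ) : k) + (2*(r:k)+6) * ((betaSeq (r+2) : ℤ) : k) := by
      have h := Qseq_succ (r+2)
      rw [show (r+2)+1 = r+3 from by omega] at h
      rw [h]
      push_cast
      ring
    have hRc : ((Rseq (r+3) : ℤ) : k)
        = (2*(r:k)+7) * ((Rseq (r+2) : ℤ) : k) + ((r:k)+2) * ((2*(r:k)+5) * ((alphaP (r+2) : ℤ) : k)) := by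
      have h := Rseq_succ (r+2)
      rw [dfOdd_eq (r+2), show (r+2)+1 = r+3 from by omega] at h
      rw [h]
      push_cast
      ring
    rw [hPc, hQc, hRc]
    push_cast
    ring


end PS

section Final

variable {p : ℕ} {k : Type*} [Field k]

theorem main_final (hp : p.Prime) (hp2 : p ≠ 2) (hchar : CharP k p)
    (g : PowerSeries k) (a2 a3 a4 : k)
    (hg : ∀ n : ℕ, n < 6 → PowerSeries.coeff n g =
      PowerSeries.coeff n (PowerSeries.X * (1 + PowerSeries.C a2 * PowerSeries.X ^ 2
        + PowerSeries.C a3 * PowerSeries.X ^ 3 + PowerSeries.C a4 * PowerSeries.X ^ 4))) :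
    ∀ n : ℕ, n < 2 * p + 4 →
      PowerSeries.coeff n ((fun h => PScomp h g)^[p] PowerSeries.X - PowerSeries.X) =
      PowerSeries.coeff n (PowerSeries.monomial (2 * p + 3)
        (a2 ^ (p - 2) * ((3 / 2 : k) * a2 ^ 3 + a3 ^ 2 - a2 * a4))) := by
  haveI := hchar
  haveI := Fact.mk hp
  have hp3 : 3 ≤ p := by
    have := hp.two_le
    omega
  obtain ⟨m, hm⟩ := hp.odd_of_ne_two hp2
  obtain ⟨t, hpt⟩ : ∃ t, p = 2*t+3 := ⟨m-1, by omega⟩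
  have hexp : (X*(1 + C a2*X^2 + C a3*X^3 + C a4*X^4) : PowerSeries k)
      = X + C a2 * X^3 + C a3 * X^4 + C a4 * X^5 := by ring
  have hcoeff : ∀ n, n < 6 → coeff n g
      = coeff n (X + C a2*X^3 + C a3*X^4 + C a4*X^5 : PowerSeries k) :=
    fun n hn => by rw [hg n hn, hexp]
  have h0 : coeff 0 g = 0 := by
    rw [hcoeff 0 (by norm_num)]
    simp [coeff_X, coeff_X_pow, coeff_C_mul]
  have h1 : coeff 1 g = 1 := by
    rw [hcoeff 1 (by norm_num)]
    simp [coeff_X, coeff_X_pow, coeff_C_mul]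
  have h2 : coeff 2 g = 0 := by
    rw [hcoeff 2 (by norm_num)]
    simp [coeff_X, coeff_X_pow, coeff_C_mul]
  have h3 : coeff 3 g = a2 := by
    rw [hcoeff 3 (by norm_num)]
    simp [coeff_X, coeff_X_pow, coeff_C_mul]
  have h4 : coeff 4 g = a3 := by
    rw [hcoeff 4 (by norm_num)]
    simp [coeff_X, coeff_X_pow, coeff_C_mul]
  have h5 : coeff 5 g = a4 := by
    rw [hcoeff 5 (by norm_num)]
    simp [coeff_X, coeff_X_pow, coeff_C_mul]
  set ψ : ZMod p →+* k := ZMod.castHom (dvd_refl p) k with hψ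
  have transfer : ∀ x : ℤ, (x : k) = ψ ((x : ZMod p)) := fun x => (map_intCast ψ x).symm
  have valP : ((Pseq p : ℤ) : k) = -1 := by
    rw [transfer, Pseq_val hp hpt]
    simp
  have valR : ((Rseq p : ℤ) : k) = -(t:k) := by
    rw [transfer, Rseq_val hp hpt]
    simp
  have valQ : ((Qseq p : ℤ) : k) = 1 := by
    rw [transfer, Qseq_val hp hpt]
    simp
  have valA : ((alphaP p : ℤ) : k) = 0 := by
    rw [transfer, alphaP_val hp hpt]
    simp
  have valB : ((betaSeq p : ℤ) : k) = 0 := by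
    rw [transfer, betaSeq_val hp hpt]
    simp
  have h2k : (2:k) ≠ 0 := by
    intro hk
    have h2' : ((2:ℕ):k) = 0 := by push_cast; exact hk
    have := (CharP.cast_eq_zero_iff k p 2).mp h2'
    have := (Nat.prime_dvd_prime_iff_eq hp Nat.prime_two).mp this
    exact hp2 this
  intro n hn
  rw [map_sub, main_identity g h0 h1 p n, PowerSeries.coeff_monomial]
  have hkill : ∑ r ∈ range (p+1), ((p.choose r : ℕ) : k) * Wf g r n = Wf g p n := by
    rw [Finset.sum_range_succ, Nat.choose_self, Finset.sum_eq_zero]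
    · simp
    · intro r hr
      have hr' := Finset.mem_range.mp hr
      rcases Nat.eq_zero_or_pos r with h | h
      · subst h
        rw [Wf_zero, mul_zero]
      · rw [(CharP.cast_eq_zero_iff k p _).mpr (hp.dvd_choose_self (by omega) hr'), zero_mul]
  rw [hkill, add_sub_cancel_left]
  by_cases hn3 : n = 2*p+3
  · rw [if_pos hn3]
    subst hn3
    have hW := WC g a2 a3 a4 h0 h1 h2 h3 h4 h5 (p-2)
    rw [show (p-2)+2 = p from by omega, show 2*(p-2)+7 = 2*p+3 from by omega] at hW
    rw [hW, valP, valQ, valR]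
    have ht32 : (t:k) * 2 = -3 := by
      have hpk : ((p:ℕ):k) = 0 := CharP.cast_eq_zero k p
      rw [hpt] at hpk
      push_cast at hpk
      linear_combination hpk
    have ht : -(t:k) = 3/2 := by
      rw [eq_div_iff h2k]
      linear_combination -ht32
    rw [ht]
    ring
  · rw [if_neg hn3]
    rcases lt_or_ge n (2*p+1) with h | h
    · have hs := Wf_support g h0 h1 h2 (p-1) n (by omega)
      rw [show (p-1)+1 = p from by omega] at hs
      exact hs
    · by_cases hA : n = 2*p+1
      · subst hA
        have hW := WA g a2 h0 h1 h2 h3 (p-1)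
        rw [show (p-1)+1 = p from by omega, show 2*(p-1)+3 = 2*p+1 from by omega] at hW
        rw [hW, valA, zero_mul]
      · have hB : n = 2*p+2 := by omega
        subst hB
        have hW := WB g a2 a3 h0 h1 h2 h3 h4 (p-1)
        rw [show (p-1)+1 = p from by omega, show 2*(p-1)+4 = 2*p+2 from by omega] at hW
        rw [hW, valB, zero_mul, zero_mul]

end Final

end PthAux


theorem pth_iterate_first_terms
    {p : ℕ} (hp : p.Prime) (hp2 : p ≠ 2)
    {k : Type*} [Field k] (hchar : CharP k p)
    (g : PowerSeries k) (a2 a3 a4 : k)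
    (hg : ∀ n : ℕ, n < 6 → PowerSeries.coeff n g =
      PowerSeries.coeff n (PowerSeries.X * (1 + PowerSeries.C a2 * PowerSeries.X ^ 2
        + PowerSeries.C a3 * PowerSeries.X ^ 3 + PowerSeries.C a4 * PowerSeries.X ^ 4))) :
    ∀ n : ℕ, n < 2 * p + 4 →
      PowerSeries.coeff n (PowerSeries.compIterate g p - PowerSeries.X) =
      PowerSeries.coeff n (PowerSeries.monomial (2 * p + 3)
        (a2 ^ (p - 2) * ((3 / 2 : k) * a2 ^ 3 + a3 ^ 2 - a2 * a4))) := by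
  intro n hn
  have heq : PowerSeries.compIterate g p
      = (fun h => PthAux.PScomp h g)^[p] PowerSeries.X := rfl
  rw [heq]
  exact PthAux.main_final hp hp2 hchar g a2 a3 a4 hg n hn
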